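/- Let K ∈ ℕ and n = 2^K. Let S ⊆ {1,…,n} with |S| = D ≥ 1, and let h : {1,…,n} → {1,…,n} be a uniformly random function. Let j = ⌈log₂(4D)⌉. Then Pr[ lsb(h(a)) < j for all a ∈ S ] ≥ 3/4. -/

import Mathlib

open Finset
open scoped Classical

lemma count_eval {n : ℕ} (a : Fin n) (p : Fin n → Prop) [DecidablePred p] :
    (Finset.univ.filter fun h : Fin n → Fin n => p (h a)).card
      = (Finset.univ.filter p).card * n ^ (n - 1) := by
  rw [← Fintype.card_subtype, ← Fintype.card_subtype]
  have e : {h : Fin n → Fin n // p (h a)}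
      ≃ {v : Fin n // p v} × ({ j : Fin n // j ≠ a } → Fin n) :=
    ((Equiv.funSplitAt a (Fin n)).subtypeEquiv (fun h => Iff.rfl)).trans
      Equiv.prodSubtypeFstEquivSubtypeProd
  rw [Fintype.card_congr e, Fintype.card_prod, Fintype.card_fun, Fintype.card_fin]
  congr 2
  rw [Fintype.card_subtype_compl, Fintype.card_subtype_eq, Fintype.card_fin]

/-- For a set `S` of `D ≥ 1` elements of `{1,…,n}` with `n = 2^K`, and a uniformly
random hash `h : {1,…,n} → {1,…,n}` (encoded via `Fin n`, with hash values
`(h a) + 1 ∈ {1,…,n}`), with probability at least `3/4` every element `a ∈ S` has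
`lsb(h(a)) < ⌈log₂(4D)⌉`, where `lsb` is the 2-adic valuation. -/
theorem stmt11 (K : ℕ) (n : ℕ) (hn : n = 2 ^ K) (S : Finset (Fin n))
    (hS : 1 ≤ S.card) :
    (3 / 4 : ℝ) ≤
      ((Finset.univ.filter (fun h : Fin n → Fin n =>
          ∀ a ∈ S, ((padicValNat 2 ((h a : ℕ) + 1) : ℤ) <
            ⌈Real.logb 2 (4 * (S.card : ℝ))⌉))).card : ℝ) /
        (Fintype.card (Fin n → Fin n) : ℝ) := by
  have hn0 : 0 < n := hn ▸ pow_pos (by norm_num) K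
  set D := S.card with hD
  set j : ℤ := ⌈Real.logb 2 (4 * (D : ℝ))⌉ with hj
  have hD1 : (1 : ℝ) ≤ (D : ℝ) := by exact_mod_cast hS
  have hx : (0 : ℝ) < 4 * (D : ℝ) := by linarith
  have hlogle : Real.logb 2 (4 * (D : ℝ)) ≤ (j : ℝ) := Int.le_ceil _
  have hj0 : 0 ≤ j := by
    have h0 : (0 : ℝ) ≤ Real.logb 2 (4 * (D : ℝ)) := by
      apply Real.logb_nonneg (by norm_num)
      linarith
    exact_mod_cast le_trans h0 hlogle
  set J := j.toNat with hJ
  have hjJ : (J : ℤ) = j := Int.toNat_of_nonneg hj0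
  -- 4 * D ≤ 2 ^ J
  have hpow : 4 * D ≤ 2 ^ J := by
    have h1 : (4 * (D : ℝ)) ≤ (2 : ℝ) ^ J := by
      calc (4 * (D : ℝ)) = (2 : ℝ) ^ Real.logb 2 (4 * (D : ℝ)) :=
            (Real.rpow_logb (by norm_num) (by norm_num) hx).symm
        _ ≤ (2 : ℝ) ^ ((J : ℝ)) := by
            apply Real.rpow_le_rpow_of_exponent_le (by norm_num)
            rw [show ((J : ℝ)) = ((J : ℤ) : ℝ) by push_cast; ring, hjJ]
            exact hlogle
        _ = (2 : ℝ) ^ (J : ℕ) := by rw [Real.rpow_natCast]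
    exact_mod_cast h1
  -- count of bad values
  set m := (Finset.univ.filter fun v : Fin n => J ≤ padicValNat 2 ((v : ℕ) + 1)).card with hm
  have hmle : m ≤ n / 2 ^ J := by
    rw [hm, ← Nat.Ioc_filter_dvd_card_eq_div]
    apply Finset.card_le_card_of_injOn (fun v : Fin n => (v : ℕ) + 1)
    · intro v hv
      simp only [Finset.coe_filter, Set.mem_setOf_eq, Finset.mem_filter, Finset.mem_univ, true_and] at hv
      simp only [Finset.coe_filter, Set.mem_setOf_eq, Finset.mem_filter, Finset.mem_Ioc]
      refine ⟨⟨Nat.succ_pos _, ?_⟩, ?_⟩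
      · exact v.isLt
      · exact dvd_trans (pow_dvd_pow 2 hv) pow_padicValNat_dvd
    · intro v _ w _ hvw
      exact Fin.val_injective (Nat.succ_injective hvw)
  have hmn : 4 * D * m ≤ n := by
    calc 4 * D * m ≤ 2 ^ J * m := Nat.mul_le_mul_right m hpow
      _ = m * 2 ^ J := Nat.mul_comm _ _
      _ ≤ (n / 2 ^ J) * 2 ^ J := Nat.mul_le_mul_right _ hmle
      _ ≤ n := Nat.div_mul_le_self n _
  -- union bound
  set G := (Finset.univ.filter (fun h : Fin n → Fin n =>
      ∀ a ∈ S, ((padicValNat 2 ((h a : ℕ) + 1) : ℤ) < j))) with hG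
  set B := (Finset.univ.filter (fun h : Fin n → Fin n =>
      ¬ ∀ a ∈ S, ((padicValNat 2 ((h a : ℕ) + 1) : ℤ) < j))) with hB
  have hsum : G.card + B.card = n ^ n := by
    rw [hG, hB, Finset.card_filter_add_card_filter_not]
    simp [Fintype.card_fun]
  have hBsub : B ⊆ S.biUnion (fun a =>
      Finset.univ.filter fun h : Fin n → Fin n => J ≤ padicValNat 2 ((h a : ℕ) + 1)) := by
    intro h hh
    simp only [hB, Finset.mem_filter, Finset.mem_univ, true_and, not_forall] at hh
    obtain ⟨a, ha, hval⟩ := hh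
    simp only [Finset.mem_biUnion]
    refine ⟨a, ha, ?_⟩
    simp only [Finset.mem_filter, Finset.mem_univ, true_and]
    have : j ≤ (padicValNat 2 ((h a : ℕ) + 1) : ℤ) := not_lt.mp hval
    omega
  have hBcard : B.card ≤ D * (m * n ^ (n - 1)) := by
    calc B.card ≤ (S.biUnion (fun a =>
        Finset.univ.filter fun h : Fin n → Fin n =>
          J ≤ padicValNat 2 ((h a : ℕ) + 1))).card := Finset.card_le_card hBsub
      _ ≤ ∑ a ∈ S, (Finset.univ.filter fun h : Fin n → Fin n =>
          J ≤ padicValNat 2 ((h a : ℕ) + 1)).card := Finset.card_biUnion_le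
      _ = ∑ a ∈ S, m * n ^ (n - 1) := by
          apply Finset.sum_congr rfl
          intro a _
          exact count_eval a (fun v => J ≤ padicValNat 2 ((v : ℕ) + 1))
      _ = D * (m * n ^ (n - 1)) := by rw [Finset.sum_const, smul_eq_mul]
  have h4B : 4 * B.card ≤ n ^ n := by
    calc 4 * B.card ≤ 4 * (D * (m * n ^ (n - 1))) := Nat.mul_le_mul_left 4 hBcard
      _ = (4 * D * m) * n ^ (n - 1) := by ring
      _ ≤ n * n ^ (n - 1) := Nat.mul_le_mul_right _ hmn
      _ = n ^ (n - 1 + 1) := (pow_succ' n (n - 1)).symm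
      _ = n ^ n := by congr 1; omega
  have hkey : 3 * n ^ n ≤ 4 * G.card := by omega
  -- conclude in ℝ
  have hpos : (0 : ℝ) < ((Fintype.card (Fin n → Fin n) : ℝ)) := by
    simp only [Fintype.card_fun, Fintype.card_fin]
    positivity
  rw [le_div_iff₀ hpos]
  have hcard : ((Fintype.card (Fin n → Fin n) : ℝ)) = ((n ^ n : ℕ) : ℝ) := by
    simp [Fintype.card_fun]
  rw [hcard]
  have h1 : ((3 * n ^ n : ℕ) : ℝ) ≤ ((4 * G.card : ℕ) : ℝ) := by exact_mod_cast hkey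
  push_cast at h1
  have : (G.card : ℝ) = ((Finset.univ.filter (fun h : Fin n → Fin n =>
      ∀ a ∈ S, ((padicValNat 2 ((h a : ℕ) + 1) : ℤ) <
        ⌈Real.logb 2 (4 * (S.card : ℝ))⌉))).card : ℝ) := by rw [hG, hj, hD]
  push_cast
  linarith [this]
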